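/- Two-perpendiculars lemma: in a real inner product space, let a, b, c, d be pairwise distinct points with ⟪b - a, d - a⟫ = 0 and ⟪c - d, d - a⟫ = 0 (so ab ⊥ ad and cd ⊥ ad). If m lies on the line through a and d (Collinear ℝ {a, d, m}) and m lies strictly between b and c (Sbtw ℝ b m c), then m lies strictly between a and d: Sbtw ℝ a m d. -/

import Mathlib

/-- Two-perpendiculars lemma: if `ab ⊥ ad` and `cd ⊥ ad`, and the segment `bc` meets
the line through `a` and `d` in a point `m`, then `m` is strictly between `a` and `d`. -/
theorem two_perpendiculars {V : Type*} [NormedAddCommGroup V] [InnerProductSpace ℝ V]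
    {a b c d m : V}
    (hab : a ≠ b) (hac : a ≠ c) (had : a ≠ d) (hbc : b ≠ c) (hbd : b ≠ d) (hcd : c ≠ d)
    (h1 : inner ℝ (b - a) (d - a) = (0 : ℝ)) (h2 : inner ℝ (c - d) (d - a) = (0 : ℝ))
    (hm : Collinear ℝ ({a, d, m} : Set V)) (hbm : Sbtw ℝ b m c) :
    Sbtw ℝ a m d := by
  -- get s ∈ Ioo 0 1 with m = lineMap b c s
  obtain ⟨s, hs, hms⟩ := hbm.mem_image_Ioo
  -- collinearity: m - a = t • (d - a)
  have hcol : ∃ t : ℝ, m - a = t • (d - a) := by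
    rw [collinear_iff_of_mem (Set.mem_insert a _)] at hm
    obtain ⟨v, hv⟩ := hm
    obtain ⟨r, hr⟩ := hv d (by simp)
    obtain ⟨u, hu⟩ := hv m (by simp)
    have hr0 : r ≠ 0 := by
      rintro rfl
      simp at hr
      exact had hr.symm
    refine ⟨u / r, ?_⟩
    have hd : d - a = r • v := by simp [hr]
    have hmv : m - a = u • v := by simp [hu]
    rw [hd, hmv, smul_smul, div_mul_cancel₀ _ hr0]
  obtain ⟨t, ht⟩ := hcol
  -- compute inner products
  have hma : m - a = (1 - s) • (b - a) + s • (c - d) + s • (d - a) := by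
    simp only [AffineMap.lineMap_apply, vsub_eq_sub, vadd_eq_add] at hms
    rw [← hms]
    module
  have key : t * ‖d - a‖ ^ 2 = s * ‖d - a‖ ^ 2 := by
    have e1 : inner ℝ (m - a) (d - a) = t * ‖d - a‖ ^ 2 := by
      rw [ht, real_inner_smul_left, real_inner_self_eq_norm_sq]
    have e2 : inner ℝ (m - a) (d - a) = s * ‖d - a‖ ^ 2 := by
      rw [hma, inner_add_left, inner_add_left, real_inner_smul_left,
        real_inner_smul_left, real_inner_smul_left, h1, h2,
        real_inner_self_eq_norm_sq]
      ring
    rw [← e1, e2]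
  have hda : ‖d - a‖ ^ 2 ≠ 0 :=
    pow_ne_zero _ (norm_ne_zero_iff.2 (sub_ne_zero.2 had.symm))
  have hts : t = s := mul_right_cancel₀ hda key
  subst hts
  have hm' : m = AffineMap.lineMap a d t := by
    simp only [AffineMap.lineMap_apply, vsub_eq_sub, vadd_eq_add]
    have := ht
    rw [sub_eq_iff_eq_add] at this
    rw [this]
  rw [hm']
  exact (sbtw_lineMap_iff).2 ⟨had, hs⟩
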